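/- The norm ‖EF - E∧F‖ is unchanged when E and F are replaced by their complements: ‖EF - E∧F‖ = ‖(1-E)(1-F) - (1-E)∧(1-F)‖. -/

import Mathlib

/-- The orthogonal projection `E ∧ F` onto `ran E ∩ ran F`. -/
noncomputable def projWedge {H : Type*} [NormedAddCommGroup H] [InnerProductSpace ℂ H]
    [FiniteDimensional ℂ H] (E F : H →L[ℂ] H) : H →L[ℂ] H :=
  (LinearMap.range (E : H →ₗ[ℂ] H) ⊓ LinearMap.range (F : H →ₗ[ℂ] H)).subtypeL ∘L
    Submodule.orthogonalProjectionOnto (LinearMap.range (E : H →ₗ[ℂ] H) ⊓ LinearMap.range (F : H →ₗ[ℂ] H))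

open ContinuousLinearMap

set_option linter.unusedSectionVars false
set_option maxHeartbeats 1000000

section Helpers

variable {H : Type*} [NormedAddCommGroup H] [InnerProductSpace ℂ H] [FiniteDimensional ℂ H]

local notation "⟪" x ", " y "⟫" => @inner ℂ _ _ x y

lemma idem_app {A : H →L[ℂ] H} (hA2 : A ∘L A = A) (x : H) : A (A x) = A x := by
  have := ContinuousLinearMap.ext_iff.mp hA2 x
  simpa using this

lemma idem_fix {A : H →L[ℂ] H} (hA2 : A ∘L A = A) {x : H} (hx : x ∈ LinearMap.range (A : H →ₗ[ℂ] H)) :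
    A x = x := by
  obtain ⟨y, rfl⟩ := hx
  exact idem_app hA2 y

lemma inner_idem {B : H →L[ℂ] H} (hB : IsSelfAdjoint B) (hB2 : B ∘L B = B) (y : H) :
    ⟪B y, y⟫ = (‖B y‖ : ℂ) ^ 2 := by
  calc ⟪B y, y⟫ = ⟪B (B y), y⟫ := by rw [idem_app hB2]
    _ = ⟪(adjoint B) (B y), y⟫ := by rw [hB.adjoint_eq]
    _ = ⟪B y, B y⟫ := adjoint_inner_left _ _ _
    _ = (‖B y‖ : ℂ) ^ 2 := inner_self_eq_norm_sq_to_K _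

lemma idem_norm_le {B : H →L[ℂ] H} (hB : IsSelfAdjoint B) (hB2 : B ∘L B = B) (y : H) :
    ‖B y‖ ≤ ‖y‖ := by
  have h := inner_idem hB hB2 y
  have h2 : ‖B y‖ ^ 2 = ‖⟪B y, y⟫‖ := by rw [h]; simp [abs_of_nonneg, sq_abs]
  have h3 : ‖⟪B y, y⟫‖ ≤ ‖B y‖ * ‖y‖ := by
    simpa using norm_inner_le_norm (𝕜 := ℂ) (B y) y
  rcases eq_or_lt_of_le (norm_nonneg (B y)) with h0 | h0
  · rw [← h0]; exact norm_nonneg y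
  · nlinarith [h2, h3]

lemma idem_fix_of_norm_eq {B : H →L[ℂ] H} (hB : IsSelfAdjoint B) (hB2 : B ∘L B = B) {y : H}
    (hy : ‖B y‖ = ‖y‖) : B y = y := by
  have horth : ⟪B y, y - B y⟫ = 0 := by
    have h := adjoint_inner_left B (y - B y) y
    rw [hB.adjoint_eq] at h
    rw [h, map_sub, idem_app hB2]
    simp
  have hpy := norm_add_sq_eq_norm_sq_add_norm_sq_of_inner_eq_zero (B y) (y - B y) horth
  simp only [add_sub_cancel] at hpy
  rw [hy] at hpy
  have h0 : ‖y - B y‖ * ‖y - B y‖ = 0 := by linarith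
  have := mul_self_eq_zero.mp h0
  rw [norm_eq_zero, sub_eq_zero] at this
  exact this.symm

noncomputable def projS (U : Submodule ℂ H) : H →L[ℂ] H :=
  U.subtypeL ∘L U.orthogonalProjectionOnto

lemma projS_apply (U : Submodule ℂ H) (x : H) : projS U x = (U.orthogonalProjectionOnto x : H) := rfl

lemma projS_mem (U : Submodule ℂ H) (x : H) : projS U x ∈ U := (U.orthogonalProjectionOnto x).2

lemma projS_fix (U : Submodule ℂ H) {x : H} (hx : x ∈ U) : projS U x = x :=
  Submodule.starProjection_eq_self_iff.mpr hx

lemma projS_sa (U : Submodule ℂ H) : IsSelfAdjoint (projS U) :=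
  isSelfAdjoint_starProjection U

lemma projS_idem (U : Submodule ℂ H) : projS U ∘L projS U = projS U := by
  ext x
  exact projS_fix U (projS_mem U x)

section EF

variable {E F : H →L[ℂ] H}

lemma wedge_sa : IsSelfAdjoint (projWedge E F) := projS_sa _

lemma wedge_idem : projWedge E F ∘L projWedge E F = projWedge E F := projS_idem _

lemma comp_wedge_left (hE2 : E ∘L E = E) : E ∘L projWedge E F = projWedge E F := by
  ext x
  exact idem_fix hE2 (projS_mem (LinearMap.range (E : H →ₗ[ℂ] H) ⊓ LinearMap.range (F : H →ₗ[ℂ] H)) x).1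

lemma comp_wedge_right (hF2 : F ∘L F = F) : F ∘L projWedge E F = projWedge E F := by
  ext x
  exact idem_fix hF2 (projS_mem (LinearMap.range (E : H →ₗ[ℂ] H) ⊓ LinearMap.range (F : H →ₗ[ℂ] H)) x).2

lemma wedge_comp_left (hE : IsSelfAdjoint E) (hE2 : E ∘L E = E) :
    projWedge E F ∘L E = projWedge E F := by
  have h := congrArg ContinuousLinearMap.adjoint (comp_wedge_left (E := E) (F := F) hE2)
  rwa [adjoint_comp, hE.adjoint_eq, (wedge_sa (E := E) (F := F)).adjoint_eq] at h

lemma wedge_comp_right (hF : IsSelfAdjoint F) (hF2 : F ∘L F = F) :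
    projWedge E F ∘L F = projWedge E F := by
  have h := congrArg ContinuousLinearMap.adjoint (comp_wedge_right (E := E) (F := F) hF2)
  rwa [adjoint_comp, hF.adjoint_eq, (wedge_sa (E := E) (F := F)).adjoint_eq] at h

lemma wedge_trivial (hE : IsSelfAdjoint E) (hE2 : E ∘L E = E)
    (hF : IsSelfAdjoint F) (hF2 : F ∘L F = F) :
    ∀ x : H, (E - projWedge E F) x = x → (F - projWedge E F) x = x → x = 0 := by
  set P := projWedge E F with hP
  intro x h1 h2
  have hc : P ∘L (E - P) = 0 := by
    rw [comp_sub, wedge_comp_left hE hE2, wedge_idem, sub_self]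
  have hPx : P x = 0 := by
    calc P x = P ((E - P) x) := by rw [h1]
      _ = (P ∘L (E - P)) x := rfl
      _ = 0 := by rw [hc]; rfl
  have hEx : E x = x := by
    have := h1
    rw [ContinuousLinearMap.sub_apply, hPx, sub_zero] at this
    exact this
  have hFx : F x = x := by
    have := h2
    rw [ContinuousLinearMap.sub_apply, hPx, sub_zero] at this
    exact this
  have hmem : x ∈ LinearMap.range (E : H →ₗ[ℂ] H) ⊓ LinearMap.range (F : H →ₗ[ℂ] H) := ⟨⟨x, hEx⟩, ⟨x, hFx⟩⟩
  have hfix : P x = x := projS_fix _ hmem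
  rw [hPx] at hfix
  exact hfix.symm

lemma expand4 (X Y Z W : H →L[ℂ] H) :
    (X - Y) * (Z - W) = X * Z - X * W - Y * Z + Y * W := by noncomm_ring

lemma sq_eq (hE : IsSelfAdjoint E) (hE2 : E ∘L E = E)
    (hF : IsSelfAdjoint F) (hF2 : F ∘L F = F) :
    ‖E ∘L F - projWedge E F‖ ^ 2 =
      ‖(E - projWedge E F) ∘L ((F - projWedge E F) ∘L (E - projWedge E F))‖ := by
  set P := projWedge E F with hPdef
  have hPsa : IsSelfAdjoint P := wedge_sa
  have hEP : E * P = P := comp_wedge_left hE2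
  have hFP : F * P = P := comp_wedge_right hF2
  have hPE : P * E = P := wedge_comp_left hE hE2
  have hPF : P * F = P := wedge_comp_right hF hF2
  have hPP : P * P = P := wedge_idem
  have hEE : E * E = E := hE2
  have hFF : F * F = F := hF2
  have hstar : star (E * F - P) = F * E - P := by
    rw [star_sub, star_mul, hE.star_eq, hF.star_eq, hPsa.star_eq]
  have key := norm_adjoint_comp_self (𝕜 := ℂ) (ContinuousLinearMap.adjoint (E * F - P))
  rw [adjoint_adjoint, ← star_eq_adjoint, hstar] at key
  have hnadj : ‖F * E - P‖ = ‖E * F - P‖ := by rw [← hstar]; exact norm_star (E * F - P)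
  have hPFE : P * (F * E) = P := by rw [← mul_assoc, hPF, hPE]
  have h1 : (F - P) * (E - P) = F * E - P := by
    rw [expand4, hFP, hPE, hPP]; abel
  have h2 : (E - P) * (F * E - P) = E * (F * E) - P := by
    rw [expand4, hEP, hPFE, hPP]; abel
  have h3 : (E * F - P) * (F * E - P) = E * (F * E) - P := by
    rw [expand4, hPFE, hPP, mul_assoc E F P, hFP, hEP, mul_assoc E F (F * E),
      ← mul_assoc F F E, hFF]
    abel
  have hprod : (E * F - P) * (F * E - P) = (E - P) * ((F - P) * (E - P)) := by
    rw [h1, h2, h3]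
  show ‖E * F - P‖ ^ 2 = ‖(E - P) * ((F - P) * (E - P))‖
  rw [← hprod, pow_two]
  calc ‖E * F - P‖ * ‖E * F - P‖ = ‖F * E - P‖ * ‖F * E - P‖ := by rw [hnadj]
    _ = ‖(E * F - P) * (F * E - P)‖ := key.symm

end EF

lemma key (A B R : H →L[ℂ] H) (hA : IsSelfAdjoint A) (hA2 : A ∘L A = A)
    (hB : IsSelfAdjoint B) (hB2 : B ∘L B = B)
    (hRA : R ∘L A = A) (hRB : R ∘L B = B)
    (hAB : ∀ x : H, A x = x → B x = x → x = 0) :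
    ‖A ∘L (B ∘L A)‖ ≤ ‖(R - A) ∘L ((R - B) ∘L (R - A))‖ := by
  set S := A ∘L (B ∘L A) with hSdef
  set T := (R - A) ∘L ((R - B) ∘L (R - A)) with hTdef
  by_cases hS0 : S = 0
  · rw [hS0, norm_zero]; exact norm_nonneg T
  have hSapp : ∀ x : H, S x = A (B (A x)) := fun x => rfl
  have hSsa : IsSelfAdjoint S := by
    rw [isSelfAdjoint_iff', hSdef, adjoint_comp, adjoint_comp, hA.adjoint_eq, hB.adjoint_eq,
      comp_assoc]
  have hSym : (↑S : H →ₗ[ℂ] H).IsSymmetric := hSsa.isSymmetric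
  set n := Module.finrank ℂ H with hndef
  have hn : Module.finrank ℂ H = n := rfl
  set b := hSym.eigenvectorBasis hn with hb
  set μ := hSym.eigenvalues hn with hμ
  have heig : ∀ i, S (b i) = (μ i : ℂ) • b i := by
    intro i
    exact hSym.apply_eigenvectorBasis hn i
  have hunit : ∀ i, ‖b i‖ = 1 := fun i => b.orthonormal.1 i
  -- Each eigenvalue lies in [0, ‖T‖]
  have hbound : ∀ i, 0 ≤ μ i ∧ μ i ≤ ‖T‖ := by
    intro i
    set v := b i with hv
    have hv1 : ‖v‖ = 1 := hunit i
    have hvne : v ≠ 0 := by rw [← norm_ne_zero_iff, hv1]; norm_num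
    have hSv : S v = (μ i : ℂ) • v := heig i
    have hinner : ⟪S v, v⟫ = (‖B (A v)‖ : ℂ) ^ 2 := by
      rw [hSapp]
      calc ⟪A (B (A v)), v⟫ = ⟪(ContinuousLinearMap.adjoint A) (B (A v)), v⟫ := by
            rw [hA.adjoint_eq]
        _ = ⟪B (A v), A v⟫ := adjoint_inner_left _ _ _
        _ = (‖B (A v)‖ : ℂ) ^ 2 := inner_idem hB hB2 _
    have hval : (μ i : ℂ) = (‖B (A v)‖ : ℂ) ^ 2 := by
      rw [← hinner, hSv, inner_smul_left, inner_self_eq_norm_sq_to_K, hv1]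
      simp [Complex.conj_ofReal]
    have hμr : μ i = ‖B (A v)‖ ^ 2 := by exact_mod_cast hval
    have hμ0 : 0 ≤ μ i := by rw [hμr]; positivity
    refine ⟨hμ0, ?_⟩
    rcases eq_or_lt_of_le hμ0 with hz | hpos
    · rw [← hz]; exact norm_nonneg T
    have hμC : (μ i : ℂ) ≠ 0 := by
      simpa using ne_of_gt hpos
    -- A v = v
    have hAv : A v = v := by
      have h1 : A (S v) = S v := by
        rw [hSapp, idem_app hA2]
      rw [hSv, map_smul] at h1
      exact smul_right_injective H hμC h1
    have hBv : μ i = ‖B v‖ ^ 2 := by rw [hμr, hAv]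
    -- μ i ≤ 1
    have hBle : ‖B v‖ ≤ 1 := by
      have := idem_norm_le hB hB2 v; rwa [hv1] at this
    have hμle1 : μ i ≤ 1 := by rw [hBv]; nlinarith [norm_nonneg (B v)]
    by_cases hμ1 : μ i = 1
    · exfalso
      have hBnorm : ‖B v‖ = 1 := by nlinarith [norm_nonneg (B v), hBv]
      have hBfix : B v = v := idem_fix_of_norm_eq hB hB2 (by rw [hBnorm, hv1])
      exact hvne (hAB v hAv hBfix)
    -- 0 < μ i < 1 : transfer the eigenvector
    set y := B v - (μ i : ℂ) • v with hy
    have hyne : y ≠ 0 := by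
      intro h0
      have hBveq : B v = (μ i : ℂ) • v := by rwa [hy, sub_eq_zero] at h0
      have h2 : (μ i : ℂ) • v = (μ i : ℂ) • ((μ i : ℂ) • v) := by
        calc (μ i : ℂ) • v = B v := hBveq.symm
          _ = B (B v) := (idem_app hB2 v).symm
          _ = B ((μ i : ℂ) • v) := by rw [← hBveq]
          _ = (μ i : ℂ) • B v := map_smul _ _ _
          _ = (μ i : ℂ) • ((μ i : ℂ) • v) := by rw [hBveq]
      have h3 : v = (μ i : ℂ) • v := smul_right_injective H hμC h2
      have h4 : (1 - (μ i : ℂ)) • v = 0 := by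
        rw [sub_smul, one_smul, ← h3, sub_self]
      rcases smul_eq_zero.mp h4 with h5 | h5
      · have : (μ i : ℂ) = 1 := by linear_combination -h5
        exact hμ1 (by exact_mod_cast this)
      · exact hvne h5
    have hRv : R v = v := by
      have : (R ∘L A) v = A v := by rw [hRA]
      rw [comp_apply, hAv] at this
      exact this
    have hRBv : R (B v) = B v := by
      have : (R ∘L B) v = B v := by rw [hRB]
      rwa [comp_apply] at this
    have hABv : A (B v) = (μ i : ℂ) • v := by
      have := hSv
      rw [hSapp, hAv] at this
      exact this
    have hstep1 : (R - A) y = y := by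
      rw [hy]
      simp only [ContinuousLinearMap.sub_apply, map_sub, map_smul, hRBv, hABv, hRv, hAv]
      module
    have hstep2 : (R - B) y = (μ i : ℂ) • (B v - v) := by
      rw [hy]
      simp only [ContinuousLinearMap.sub_apply, map_sub, map_smul, hRBv, hRv,
        idem_app hB2]
      module
    have hstep3 : (R - A) ((μ i : ℂ) • (B v - v)) = (μ i : ℂ) • y := by
      simp only [map_smul, ContinuousLinearMap.sub_apply, map_sub, hRBv, hABv, hRv, hAv, hy]
      module
    have hTy : T y = (μ i : ℂ) • y := by
      rw [hTdef]
      calc (R - A) ((R - B) ((R - A) y)) = (R - A) ((R - B) y) := by rw [hstep1]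
        _ = (R - A) ((μ i : ℂ) • (B v - v)) := by rw [hstep2]
        _ = (μ i : ℂ) • y := hstep3
    have hnorm : μ i * ‖y‖ ≤ ‖T‖ * ‖y‖ := by
      calc μ i * ‖y‖ = ‖(μ i : ℂ) • y‖ := by
            rw [norm_smul, Complex.norm_real, Real.norm_eq_abs, abs_of_nonneg hμ0]
        _ = ‖T y‖ := by rw [hTy]
        _ ≤ ‖T‖ * ‖y‖ := le_opNorm T y
    exact le_of_mul_le_mul_right hnorm (norm_pos_iff.mpr hyne)
  -- conclude the operator norm bound
  refine opNorm_le_bound _ (norm_nonneg T) fun x => ?_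
  have hrepr : ∀ i, b.repr (S x) i = (μ i : ℂ) * b.repr x i := by
    intro i
    have := hSym.eigenvectorBasis_apply_self_apply hn x i
    simpa using this
  have hsq : ‖S x‖ ^ 2 ≤ (‖T‖ * ‖x‖) ^ 2 := by
    rw [← b.repr.norm_map (S x), ← b.repr.norm_map x, EuclideanSpace.norm_eq,
      EuclideanSpace.norm_eq, Real.sq_sqrt (by positivity), mul_pow,
      Real.sq_sqrt (by positivity)]
    rw [Finset.mul_sum]
    apply Finset.sum_le_sum
    intro i _
    have h1 : ‖b.repr (S x) i‖ = μ i * ‖b.repr x i‖ := by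
      rw [hrepr i]
      have h2 : ‖(μ i : ℂ) * b.repr x i‖ = ‖(μ i : ℂ)‖ * ‖b.repr x i‖ := norm_mul _ _
      have h3 : ‖(μ i : ℂ)‖ = μ i := by
        rw [Complex.norm_real, Real.norm_eq_abs, abs_of_nonneg (hbound i).1]
      rw [h2, h3]
    rw [h1, mul_pow]
    have h2 := (hbound i).2
    have h3 := (hbound i).1
    have h4 : μ i ^ 2 ≤ ‖T‖ ^ 2 := by nlinarith
    nlinarith [sq_nonneg ‖b.repr x i‖]
  have hTx : 0 ≤ ‖T‖ * ‖x‖ := by positivity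
  nlinarith [norm_nonneg (S x)]

lemma range_one_sub (G : H →L[ℂ] H) (hG : IsSelfAdjoint G) (hG2 : G ∘L G = G) :
    LinearMap.range ((1 - G : H →L[ℂ] H) : H →ₗ[ℂ] H) = (LinearMap.range (G : H →ₗ[ℂ] H))ᗮ := by
  ext x
  constructor
  · rintro ⟨y, rfl⟩
    rw [Submodule.mem_orthogonal]
    rintro u ⟨z, rfl⟩
    have h1 := adjoint_inner_left G ((1 - G) y) z
    rw [hG.adjoint_eq] at h1
    have h2 : G ((1 - G) y) = 0 := by
      have : (1 - G) y = y - G y := by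
        rw [ContinuousLinearMap.sub_apply, ContinuousLinearMap.one_apply]
      rw [this, map_sub, idem_app hG2, sub_self]
    rw [ContinuousLinearMap.coe_coe, ContinuousLinearMap.coe_coe, h1, h2, inner_zero_right]
  · intro hx
    have hGx : G x = 0 := by
      have h1 : ⟪G x, x⟫ = 0 := (Submodule.mem_orthogonal _ _).mp hx (G x) ⟨x, rfl⟩
      have h2 := inner_idem hG hG2 x
      rw [h1] at h2
      have : (‖G x‖ : ℂ) ^ 2 = 0 := h2.symm
      have h3 : ‖G x‖ = 0 := by exact_mod_cast pow_eq_zero_iff (n := 2) (by norm_num) |>.mp this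
      exact norm_eq_zero.mp h3
    exact ⟨x, by simp [ContinuousLinearMap.sub_apply, hGx]⟩


end Helpers

/-- `‖EF - E∧F‖` is unchanged when `E` and `F` are replaced by their complements. -/
theorem stmt4 {H : Type*} [NormedAddCommGroup H] [InnerProductSpace ℂ H]
    [FiniteDimensional ℂ H] (E F : H →L[ℂ] H)
    (hE : IsSelfAdjoint E) (hE2 : E ∘L E = E)
    (hF : IsSelfAdjoint F) (hF2 : F ∘L F = F) :
    ‖E ∘L F - projWedge E F‖ = ‖(1 - E) ∘L (1 - F) - projWedge (1 - E) (1 - F)‖ := by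
  set P := projWedge E F with hPdef
  set P' := projWedge (1 - E) (1 - F) with hP'def
  have hE' : IsSelfAdjoint (1 - E) := (IsSelfAdjoint.one (R := H →L[ℂ] H)).sub hE
  have hF' : IsSelfAdjoint (1 - F) := (IsSelfAdjoint.one (R := H →L[ℂ] H)).sub hF
  have hE2' : (1 - E) ∘L (1 - E) = 1 - E := by
    show (1 - E) * (1 - E) = 1 - E
    rw [expand4, one_mul, mul_one, (show E * E = E from hE2)]; abel
  have hF2' : (1 - F) ∘L (1 - F) = 1 - F := by
    show (1 - F) * (1 - F) = 1 - F
    rw [expand4, one_mul, mul_one, (show F * F = F from hF2)]; abel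
  set U := LinearMap.range (E : H →ₗ[ℂ] H) ⊔ LinearMap.range (F : H →ₗ[ℂ] H) with hUdef
  set Q := projS U with hQdef
  have hQsa : IsSelfAdjoint Q := projS_sa U
  have hQ2 : Q ∘L Q = Q := projS_idem U
  have hQE : Q ∘L E = E := by
    ext x
    exact projS_fix U (Submodule.mem_sup_left (LinearMap.mem_range_self _ x))
  have hQF : Q ∘L F = F := by
    ext x
    exact projS_fix U (Submodule.mem_sup_right (LinearMap.mem_range_self _ x))
  have hEQ : E ∘L Q = E := by
    have h := congrArg ContinuousLinearMap.adjoint hQE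
    rwa [adjoint_comp, hE.adjoint_eq, hQsa.adjoint_eq] at h
  have hFQ : F ∘L Q = F := by
    have h := congrArg ContinuousLinearMap.adjoint hQF
    rwa [adjoint_comp, hF.adjoint_eq, hQsa.adjoint_eq] at h
  have hQP : Q ∘L P = P := by
    ext x
    exact projS_fix U (Submodule.mem_sup_left
      (Submodule.mem_inf.mp (projS_mem (LinearMap.range (E : H →ₗ[ℂ] H) ⊓ LinearMap.range (F : H →ₗ[ℂ] H)) x)).1)
  have hPQ : P ∘L Q = P := by
    have h := congrArg ContinuousLinearMap.adjoint hQP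
    rwa [adjoint_comp, (wedge_sa (E := E) (F := F)).adjoint_eq, hQsa.adjoint_eq] at h
  -- P' = 1 - Q
  have hP'eq : P' = 1 - Q := by
    have hr : LinearMap.range ((1 - E : H →L[ℂ] H) : H →ₗ[ℂ] H) ⊓ LinearMap.range ((1 - F : H →L[ℂ] H) : H →ₗ[ℂ] H) = Uᗮ := by
      rw [range_one_sub E hE hE2, range_one_sub F hF hF2, hUdef,
        Submodule.inf_orthogonal]
    have : P' = projS Uᗮ := by
      rw [hP'def, show projWedge (1 - E) (1 - F) =
        projS (LinearMap.range ((1 - E : H →L[ℂ] H) : H →ₗ[ℂ] H) ⊓ LinearMap.range ((1 - F : H →L[ℂ] H) : H →ₗ[ℂ] H)) from rfl, hr]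
    rw [this]
    ext x
    have h : (Uᗮ.orthogonalProjectionOnto x : H) = x - (U.orthogonalProjectionOnto x : H) :=
      Submodule.starProjection_orthogonal_val (K := U) x
    rw [projS_apply, h]
    simp only [ContinuousLinearMap.sub_apply, ContinuousLinearMap.one_apply]
    rw [hQdef, projS_apply]
  -- multiplicative relations
  have hPsa : IsSelfAdjoint P := wedge_sa
  have hP2 : P * P = P := wedge_idem
  have hEP : E * P = P := comp_wedge_left hE2
  have hFP : F * P = P := comp_wedge_right hF2
  have hPE : P * E = P := wedge_comp_left hE hE2
  have hPF : P * F = P := wedge_comp_right hF hF2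
  have hQP' : Q * P = P := hQP
  have hPQ' : P * Q = P := hPQ
  have hQ2' : Q * Q = Q := hQ2
  set R := Q - P with hRdef
  have hRsa : IsSelfAdjoint R := hQsa.sub hPsa
  have hR2 : R * R = R := by rw [hRdef, expand4, hQ2', hQP', hPQ', hP2]; abel
  have hA2 : (E - P) * (E - P) = E - P := by
    rw [expand4, (show E * E = E from hE2), hEP, hPE, hP2]; abel
  have hB2 : (F - P) * (F - P) = F - P := by
    rw [expand4, (show F * F = F from hF2), hFP, hPF, hP2]; abel
  have hAsa : IsSelfAdjoint (E - P) := hE.sub hPsa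
  have hBsa : IsSelfAdjoint (F - P) := hF.sub hPsa
  have hRA : R * (E - P) = E - P := by
    rw [hRdef, expand4, (show Q * E = E from hQE), hQP', hPE, hP2]; abel
  have hRB : R * (F - P) = F - P := by
    rw [hRdef, expand4, (show Q * F = F from hQF), hQP', hPF, hP2]; abel
  have hA'eq : R - (E - P) = (1 - E) - P' := by rw [hP'eq, hRdef]; abel
  have hB'eq : R - (F - P) = (1 - F) - P' := by rw [hP'eq, hRdef]; abel
  have hA'sa : IsSelfAdjoint (R - (E - P)) := hRsa.sub hAsa
  have hB'sa : IsSelfAdjoint (R - (F - P)) := hRsa.sub hBsa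
  have hA'2 : (R - (E - P)) * (R - (E - P)) = R - (E - P) := by
    rw [expand4, hR2, hRA]
    have hAR : (E - P) * R = E - P := by
      rw [hRdef, expand4, (show E * Q = E from hEQ), hEP, hPQ', hP2]; abel
    rw [hAR, hA2]; abel
  have hB'2 : (R - (F - P)) * (R - (F - P)) = R - (F - P) := by
    rw [expand4, hR2, hRB]
    have hBR : (F - P) * R = F - P := by
      rw [hRdef, expand4, (show F * Q = F from hFQ), hFP, hPQ', hP2]; abel
    rw [hBR, hB2]; abel
  have hRA' : R * (R - (E - P)) = R - (E - P) := by rw [mul_sub, hR2, hRA]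
  have hRB' : R * (R - (F - P)) = R - (F - P) := by rw [mul_sub, hR2, hRB]
  have htriv : ∀ x : H, (E - P) x = x → (F - P) x = x → x = 0 :=
    wedge_trivial hE hE2 hF hF2
  have htriv' : ∀ x : H, (R - (E - P)) x = x → (R - (F - P)) x = x → x = 0 := by
    rw [hA'eq, hB'eq]
    exact wedge_trivial hE' hE2' hF' hF2'
  have ineq1 := key (E - P) (F - P) R hAsa hA2 hBsa hB2 hRA hRB htriv
  have ineq2 := key (R - (E - P)) (R - (F - P)) R hA'sa hA'2 hB'sa hB'2 hRA' hRB' htriv'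
  rw [show R - (R - (E - P)) = E - P from by abel,
    show R - (R - (F - P)) = F - P from by abel] at ineq2
  have hnorm_eq : ‖(E - P) ∘L ((F - P) ∘L (E - P))‖ =
      ‖(R - (E - P)) ∘L ((R - (F - P)) ∘L (R - (E - P)))‖ := le_antisymm ineq1 ineq2
  have hsq1 := sq_eq hE hE2 hF hF2
  have hsq2 := sq_eq hE' hE2' hF' hF2'
  rw [← hP'def, ← hA'eq, ← hB'eq] at hsq2
  have hfin : ‖E ∘L F - P‖ ^ 2 = ‖(1 - E) ∘L (1 - F) - P'‖ ^ 2 := by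
    rw [hsq1, hsq2, hnorm_eq]
  have h1 := Real.sqrt_sq (norm_nonneg (E ∘L F - P))
  have h2 := Real.sqrt_sq (norm_nonneg ((1 - E) ∘L (1 - F) - P'))
  rw [← h1, ← h2, hfin]
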